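/- For every integer m ≥ 1, Σ_{j=1}^{m} s(m,j) B_{j-1}(x) = (-1)^{m-1} D_{m-1}(1-x) as polynomials in x. -/

import Mathlib

open Polynomial Finset

/-- Stirling numbers of the second kind. -/
def stirling2 : ℕ → ℕ → ℕ
  | 0, 0 => 1
  | 0, _ + 1 => 0
  | _ + 1, 0 => 0
  | n + 1, k + 1 => (k + 1) * stirling2 n (k + 1) + stirling2 n k

/-- Signed Stirling numbers of the first kind. -/
def stirling1 : ℕ → ℕ → ℤ
  | 0, 0 => 1
  | 0, _ + 1 => 0
  | n + 1, 0 => -(n : ℤ) * stirling1 n 0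
  | n + 1, k + 1 => stirling1 n k - (n : ℤ) * stirling1 n (k + 1)

/-- The Bell polynomial `B_m(x) = ∑_{j=0}^m S(m,j) x^j` over `ℤ`. -/
noncomputable def bellPoly (m : ℕ) : Polynomial ℤ :=
  ∑ j ∈ range (m + 1), (stirling2 m j : ℤ) • X ^ j

/-- The derangement polynomial `D_m(x) = ∑_{j=0}^m C(m,j) j! (x-1)^{m-j}` over `ℤ`. -/
noncomputable def derPoly (m : ℕ) : Polynomial ℤ :=
  ∑ j ∈ range (m + 1), ((m.choose j * j.factorial : ℕ) : ℤ) • (X - 1) ^ (m - j)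

/-- The Bell numbers `B_m = ∑_j S(m,j)`. -/
def bell (m : ℕ) : ℕ := ∑ j ∈ range (m + 1), stirling2 m j

lemma stirling2_eq_zero : ∀ {n j : ℕ}, n < j → stirling2 n j = 0
  | 0, 0, h => absurd h (by simp)
  | 0, j + 1, _ => rfl
  | n + 1, 0, h => absurd h (by simp)
  | n + 1, j + 1, h => by
    have h1 : n < j + 1 := by omega
    have h2 : n < j := by omega
    simp [stirling2, stirling2_eq_zero h1, stirling2_eq_zero h2]

lemma stirling1_eq_zero : ∀ {n j : ℕ}, n < j → stirling1 n j = 0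
  | 0, 0, h => absurd h (by simp)
  | 0, j + 1, _ => rfl
  | n + 1, 0, h => absurd h (by simp)
  | n + 1, j + 1, h => by
    have h1 : n < j + 1 := by omega
    have h2 : n < j := by omega
    simp [stirling1, stirling1_eq_zero h1, stirling1_eq_zero h2]

lemma stirling1_zero_right (n : ℕ) : stirling1 (n + 1) 0 = 0 := by
  induction n with
  | zero => simp [stirling1]
  | succ k ih => simp [stirling1] at ih ⊢; simp [ih]

lemma bellPoly_succ (n : ℕ) :
    bellPoly (n + 1) = X * bellPoly n + X * derivative (bellPoly n) := by
  have hd : X * derivative (bellPoly n) =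
      ∑ j ∈ range (n + 1), ((j : ℤ) * stirling2 n j) • X ^ j := by
    rw [bellPoly, derivative_sum, Finset.mul_sum]
    refine Finset.sum_congr rfl fun j hj => ?_
    rcases j with _ | j
    · simp
    · rw [derivative_smul, derivative_X_pow]
      simp only [smul_eq_C_mul, C_add, C_mul, C_1]
      push_cast
      simp only [C_add, C_mul, C_1]
      ring
  have hb : X * bellPoly n = ∑ j ∈ range (n + 1), (stirling2 n j : ℤ) • X ^ (j + 1) := by
    rw [bellPoly, Finset.mul_sum]
    refine Finset.sum_congr rfl fun j _ => ?_
    rw [smul_eq_C_mul, smul_eq_C_mul]; ring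
  rw [bellPoly, Finset.sum_range_succ', hd, hb]
  have h0 : (stirling2 (n + 1) 0 : ℤ) = 0 := by simp [stirling2]
  rw [h0, zero_smul, add_zero]
  have hstep : ∀ j, ((stirling2 (n + 1) (j + 1) : ℤ)) • (X : Polynomial ℤ) ^ (j + 1) =
      (stirling2 n j : ℤ) • X ^ (j + 1) + (((j : ℕ) + 1 : ℤ) * stirling2 n (j + 1)) • X ^ (j + 1) := by
    intro j
    have h : stirling2 (n + 1) (j + 1) = (j + 1) * stirling2 n (j + 1) + stirling2 n j := rfl
    rw [h]
    simp only [smul_eq_C_mul]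
    push_cast
    simp only [C_add, C_mul, C_1]
    ring
  rw [Finset.sum_congr rfl (fun j _ => hstep j), Finset.sum_add_distrib]
  congr 1
  have h2 := Finset.sum_range_succ' (fun j => ((j : ℤ) * stirling2 n j) • (X : Polynomial ℤ) ^ j) (n + 1)
  rw [Finset.sum_range_succ] at h2
  simp only [stirling2_eq_zero (Nat.lt_succ_self n)] at h2
  simp only [Nat.cast_zero, Nat.cast_add, Nat.cast_one, Nat.cast_ofNat, zero_mul, zero_smul,
    mul_zero, add_zero, pow_zero] at h2
  rw [← h2]

lemma bellPoly_zero : bellPoly 0 = 1 := by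
  simp [bellPoly, stirling2]

lemma key (m : ℕ) : ∑ j ∈ range (m + 1), C (stirling1 m j) * bellPoly j = X ^ m := by
  induction m with
  | zero => simp [stirling1, bellPoly_zero]
  | succ m ih =>
    rw [Finset.sum_range_succ']
    have h0 : stirling1 (m + 1) 0 = 0 := by
      cases m with
      | zero => simp [stirling1]
      | succ k => exact stirling1_zero_right (k + 1)
    rw [h0]
    simp only [map_zero, zero_mul, add_zero]
    have hstep : ∀ j, C (stirling1 (m + 1) (j + 1)) * bellPoly (j + 1) =
        C (stirling1 m j) * bellPoly (j + 1)
          - C ((m : ℤ)) * (C (stirling1 m (j + 1)) * bellPoly (j + 1)) := by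
      intro j
      have h : stirling1 (m + 1) (j + 1) = stirling1 m j - (m : ℤ) * stirling1 m (j + 1) := rfl
      rw [h, map_sub, map_mul]
      ring
    rw [Finset.sum_congr rfl (fun j _ => hstep j), Finset.sum_sub_distrib]
    have hzero : C ((m : ℤ)) * C (stirling1 m 0) = 0 := by
      cases m with
      | zero => simp
      | succ k => rw [stirling1_zero_right k]; simp
    have h3 := Finset.sum_range_succ' (fun j => C (stirling1 m j) * bellPoly j) (m + 1)
    rw [Finset.sum_range_succ, stirling1_eq_zero (Nat.lt_succ_self m)] at h3
    simp only [map_zero, zero_mul, add_zero] at h3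
    rw [ih] at h3
    have h2 : ∑ j ∈ range (m + 1), C ((m : ℤ)) * (C (stirling1 m (j + 1)) * bellPoly (j + 1))
        = C ((m : ℤ)) * X ^ m := by
      rw [← Finset.mul_sum, h3, mul_add, ← mul_assoc, hzero, zero_mul, add_zero]
    rw [h2]
    have h1 : ∑ j ∈ range (m + 1), C (stirling1 m j) * bellPoly (j + 1)
        = X ^ (m + 1) + X * (C ((m : ℤ)) * X ^ (m - 1)) := by
      have hterm : ∀ j, C (stirling1 m j) * bellPoly (j + 1)
          = X * (C (stirling1 m j) * bellPoly j)
            + X * derivative (C (stirling1 m j) * bellPoly j) := by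
        intro j
        rw [bellPoly_succ, derivative_C_mul]
        ring
      rw [Finset.sum_congr rfl (fun j _ => hterm j), Finset.sum_add_distrib,
        ← Finset.mul_sum, ← Finset.mul_sum, ← derivative_sum, ih, derivative_X_pow]
      push_cast
      ring
    rw [h1]
    cases m with
    | zero => simp
    | succ k =>
      have : k + 1 - 1 = k := rfl
      rw [this]
      have : (X : Polynomial ℤ) * (C ((k + 1 : ℕ) : ℤ) * X ^ k) = C ((k + 1 : ℕ) : ℤ) * X ^ (k + 1) := by
        rw [pow_succ]; ring
      rw [this]
      ring


lemma derPoly_succ (m : ℕ) :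
    derPoly (m + 1) = ((m : ℤ) + 1) • derPoly m + (X - 1) ^ (m + 1) := by
  rw [derPoly, Finset.sum_range_succ']
  have h0 : (((m + 1).choose 0 * Nat.factorial 0 : ℕ) : ℤ) • ((X : Polynomial ℤ) - 1) ^ (m + 1 - 0)
      = (X - 1) ^ (m + 1) := by simp
  rw [h0]
  congr 1
  rw [derPoly, Finset.smul_sum]
  refine Finset.sum_congr rfl fun j hj => ?_
  have hsub : m + 1 - (j + 1) = m - j := by omega
  rw [hsub, smul_smul]
  congr 1
  have h : (m + 1).choose (j + 1) * (j + 1).factorial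
      = (m + 1) * (m.choose j * j.factorial) := by
    rw [Nat.factorial_succ, ← mul_assoc, mul_comm ((m + 1).choose (j + 1)) (j + 1)]
    have := Nat.add_one_mul_choose_eq m j
    rw [mul_comm ((m+1).choose (j+1)) (j+1)] at this
    rw [← this]
    ring
  push_cast [h]
  ring

theorem stirling1_bellPoly_derPoly (m : ℕ) (hm : 1 ≤ m) :
    ∑ j ∈ Icc 1 m, C (stirling1 m j) * bellPoly (j - 1) =
      (-1) ^ (m - 1) * (derPoly (m - 1)).comp (1 - X) := by
  obtain ⟨k, rfl⟩ : ∃ k, m = k + 1 := ⟨m - 1, by omega⟩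
  clear hm
  simp only [Nat.add_sub_cancel]
  induction k with
  | zero =>
    simp [stirling1, bellPoly_zero, derPoly]
  | succ k ih =>
    have hL : ∀ n, ∑ j ∈ Icc 1 (n + 1), C (stirling1 (n + 1) j) * bellPoly (j - 1)
        = ∑ i ∈ range (n + 1), C (stirling1 (n + 1) (i + 1)) * bellPoly i := by
      intro n
      rw [← Finset.Ico_add_one_right_eq_Icc, Finset.sum_Ico_eq_sum_range]
      refine Finset.sum_congr rfl fun i _ => ?_
      rw [add_comm 1 i]
      simp
    rw [hL (k + 1)]
    rw [hL k] at ih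
    have hstep : ∀ i, C (stirling1 (k + 2) (i + 1)) * bellPoly i =
        C (stirling1 (k + 1) i) * bellPoly i
          - C (((k : ℤ) + 1)) * (C (stirling1 (k + 1) (i + 1)) * bellPoly i) := by
      intro i
      have h : stirling1 (k + 2) (i + 1)
          = stirling1 (k + 1) i - ((k + 1 : ℕ) : ℤ) * stirling1 (k + 1) (i + 1) := rfl
      rw [h, map_sub, map_mul]
      push_cast
      ring
    rw [Finset.sum_congr rfl (fun i _ => hstep i), Finset.sum_sub_distrib, key (k + 1)]
    have h2 : ∑ i ∈ range (k + 2),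
        C (((k : ℤ) + 1)) * (C (stirling1 (k + 1) (i + 1)) * bellPoly i)
        = C (((k : ℤ) + 1)) * ((-1) ^ k * (derPoly k).comp (1 - X)) := by
      rw [← Finset.mul_sum, Finset.sum_range_succ,
        stirling1_eq_zero (Nat.lt_succ_self (k + 1))]
      simp only [map_zero, zero_mul, add_zero]
      rw [ih]
    rw [h2, derPoly_succ]
    rw [add_comp, smul_comp, pow_comp, sub_comp, X_comp, one_comp]
    rw [smul_eq_C_mul]
    push_cast
    ring_nf
    simp [pow_mul']
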